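/- Let Q = Σ_{i=1}^N ρᵢ rᵢrᵢ^T + ρ_{N+1} g g^T with ρᵢ > 0 for all i ∈ {1,…,N+1}. If there exists some index i ∈ {1,…,N} such that rᵢ and the vector g are linearly independent, then Q̄ := tr(Q)I₃ − Q is positive definite. -/

import Mathlib

open Matrix

noncomputable section

/-- Skew-symmetric matrix `x^×` associated to `x ∈ ℝ³`. -/
def skew (x : Fin 3 → ℝ) : Matrix (Fin 3) (Fin 3) ℝ :=
  !![0, -x 2, x 1; x 2, 0, -x 0; -x 1, x 0, 0]

/-- `ψ(A) = vec((A - Aᵀ)/2)`, the vector of the anti-symmetric part of `A`. -/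
def psi (A : Matrix (Fin 3) (Fin 3) ℝ) : Fin 3 → ℝ :=
  ![(A 2 1 - A 1 2) / 2, (A 0 2 - A 2 0) / 2, (A 1 0 - A 0 1) / 2]

lemma trace_vmv (u : Fin 3 → ℝ) : (Matrix.vecMulVec u u).trace = u ⬝ᵥ u := by
  simp [Matrix.trace, Matrix.diag, Matrix.vecMulVec_apply, dotProduct]

lemma vmv_mulVec (u v x : Fin 3 → ℝ) :
    Matrix.vecMulVec u v *ᵥ x = (v ⬝ᵥ x) • u := by
  funext j
  simp [Matrix.mulVec, Matrix.vecMulVec_apply, dotProduct, Finset.sum_mul, Pi.smul_apply,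
    mul_comm, mul_assoc, Finset.mul_sum]
  exact Finset.sum_congr rfl fun k _ => by ring

lemma lagrange (u x : Fin 3 → ℝ) :
    (u ⬝ᵥ u) * (x ⬝ᵥ x) - (u ⬝ᵥ x) * (u ⬝ᵥ x) = (crossProduct u x) ⬝ᵥ (crossProduct u x) := by
  rw [cross_dot_cross, dotProduct_comm x u]

lemma sum_mulVec' {ι : Type*} (s : Finset ι) (A : ι → Matrix (Fin 3) (Fin 3) ℝ) (x : Fin 3 → ℝ) :
    (∑ j ∈ s, A j) *ᵥ x = ∑ j ∈ s, A j *ᵥ x := by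
  funext k
  simp [Matrix.mulVec, dotProduct, Matrix.sum_apply, Finset.sum_apply, Finset.sum_mul]
  rw [Finset.sum_comm]

lemma dot_sum' {ι : Type*} (s : Finset ι) (v : ι → Fin 3 → ℝ) (x : Fin 3 → ℝ) :
    x ⬝ᵥ (∑ j ∈ s, v j) = ∑ j ∈ s, x ⬝ᵥ v j := by
  simp [dotProduct, Finset.sum_apply, Finset.mul_sum]
  exact Finset.sum_comm

lemma dot_self_nonneg' (v : Fin 3 → ℝ) : 0 ≤ v ⬝ᵥ v :=
  Finset.sum_nonneg fun k _ => mul_self_nonneg _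

lemma dot_self_pos' {v : Fin 3 → ℝ} (hv : v ≠ 0) : 0 < v ⬝ᵥ v :=
  (dot_self_nonneg' v).lt_of_ne fun h => hv (dotProduct_self_eq_zero.mp h.symm)

/-- If some inertial vector is non-collinear with the gravity vector `g`, then
`tr(Q)I₃ − Q` is positive definite. -/
theorem stmt4 (N : ℕ) (ρ : Fin N → ℝ) (ρg : ℝ) (r : Fin N → Fin 3 → ℝ) (g : Fin 3 → ℝ)
    (hρ : ∀ i, 0 < ρ i) (hρg : 0 < ρg)
    (Q : Matrix (Fin 3) (Fin 3) ℝ)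
    (hQ : Q = ∑ i, ρ i • Matrix.vecMulVec (r i) (r i) + ρg • Matrix.vecMulVec g g)
    (i : Fin N) (hindep : LinearIndependent ℝ ![r i, g]) :
    (Q.trace • (1 : Matrix (Fin 3) (Fin 3) ℝ) - Q).PosDef := by
  have hQh : Qᴴ = Q := by
    subst hQ; ext j k
    simp [Matrix.conjTranspose_apply, Matrix.add_apply, Matrix.smul_apply, Matrix.sum_apply,
      Matrix.vecMulVec_apply, mul_comm]
  refine Matrix.posDef_iff_dotProduct_mulVec.mpr ⟨?_, ?_⟩
  · show _ = _
    rw [Matrix.conjTranspose_sub, Matrix.conjTranspose_smul, Matrix.conjTranspose_one, hQh,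
      star_trivial]
  · intro x hx
    simp only [star_trivial, RCLike.re_to_real]
    -- compute the quadratic form
    have e1 : (Q.trace • (1 : Matrix (Fin 3) (Fin 3) ℝ) - Q) *ᵥ x = Q.trace • x - Q *ᵥ x := by
      rw [Matrix.sub_mulVec, Matrix.smul_mulVec, Matrix.one_mulVec]
    have e2 : Q *ᵥ x = ∑ j, ρ j • ((r j ⬝ᵥ x) • r j) + ρg • ((g ⬝ᵥ x) • g) := by
      rw [hQ, Matrix.add_mulVec, sum_mulVec', Matrix.smul_mulVec, vmv_mulVec]
      simp_rw [Matrix.smul_mulVec, vmv_mulVec]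
    have e3 : Q.trace = ∑ j, ρ j * (r j ⬝ᵥ r j) + ρg * (g ⬝ᵥ g) := by
      rw [hQ, Matrix.trace_add, Matrix.trace_sum, Matrix.trace_smul, trace_vmv]
      simp_rw [Matrix.trace_smul, trace_vmv, smul_eq_mul]
    have key : x ⬝ᵥ (Q.trace • (1 : Matrix (Fin 3) (Fin 3) ℝ) - Q) *ᵥ x
        = ∑ j, ρ j * ((crossProduct (r j) x) ⬝ᵥ (crossProduct (r j) x))
          + ρg * ((crossProduct g x) ⬝ᵥ (crossProduct g x)) := by
      rw [e1, dotProduct_sub, dotProduct_smul, e2, dotProduct_add, dot_sum',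
        dotProduct_smul]
      simp_rw [dotProduct_smul, smul_eq_mul, e3, add_mul, Finset.sum_mul]
      rw [add_sub_add_comm, ← Finset.sum_sub_distrib]
      congr 1
      · refine Finset.sum_congr rfl fun j _ => ?_
        rw [← lagrange, dotProduct_comm x (r j)]; ring
      · rw [← lagrange, dotProduct_comm x g]; ring
    rw [key]
    -- linear dependence from vanishing cross products
    have dep : ∀ u : Fin 3 → ℝ, crossProduct u x = 0 → ∃ a : ℝ, a • x = u := by
      intro u hu
      have h' : ¬ LinearIndependent ℝ ![u, x] := fun h =>
        (crossProduct_ne_zero_iff_linearIndependent.mpr h) hu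
      rw [linearIndependent_fin2] at h'
      push_neg at h'
      simpa using h' (by simpa using hx)
    have hnonneg : ∀ j : Fin N,
        0 ≤ ρ j * ((crossProduct (r j) x) ⬝ᵥ (crossProduct (r j) x)) :=
      fun j => mul_nonneg (hρ j).le (dot_self_nonneg' _)
    by_cases hri : crossProduct (r i) x = 0
    · have hgx : crossProduct g x ≠ 0 := by
        intro hg0
        obtain ⟨a, ha⟩ := dep _ hri
        obtain ⟨b, hb⟩ := dep _ hg0
        rw [linearIndependent_fin2] at hindep
        have hgne : g ≠ 0 := by simpa using hindep.1
        have hnc := hindep.2 (a / b)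
        simp only [Matrix.cons_val_one, Matrix.head_cons, Matrix.cons_val_zero] at hnc
        have hb0 : b ≠ 0 := by
          rintro rfl; rw [zero_smul] at hb; exact hgne hb.symm
        apply hnc
        rw [← hb, smul_smul, div_mul_cancel₀ _ hb0, ha]
      exact add_pos_of_nonneg_of_pos
        (Finset.sum_nonneg fun j _ => hnonneg j)
        (mul_pos hρg (dot_self_pos' hgx))
    · exact add_pos_of_pos_of_nonneg
        (Finset.sum_pos' (fun j _ => hnonneg j)
          ⟨i, Finset.mem_univ i, mul_pos (hρ i) (dot_self_pos' hri)⟩)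
        (mul_nonneg hρg.le (dot_self_nonneg' _))
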